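/- For every sequence of level numbers N with N_0 = 1, N_h > 0 for h < H, N_h = 0 for h ≥ H, and finite total sum, there exists a positive excursion x with N(x) = N; in particular X⁺(N) is nonempty. -/

import Mathlib

/-- `x` restricted to `[0,θ]` is a positive excursion: starts and ends at `0`,
is strictly positive in the interior, and has jumps `±1`. -/
def IsPosExc (x : ℕ → ℤ) (θ : ℕ) : Prop :=
  x 0 = 0 ∧ x θ = 0 ∧ (∀ n, 0 < n → n < θ → 0 < x n) ∧
    (∀ n, n < θ → x (n + 1) - x n = 1 ∨ x (n + 1) - x n = -1)

/-- `x` restricted to `[0,θ]` is a negative excursion. -/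
def IsNegExc (x : ℕ → ℤ) (θ : ℕ) : Prop :=
  x 0 = 0 ∧ x θ = 0 ∧ (∀ n, 0 < n → n < θ → x n < 0) ∧
    (∀ n, n < θ → x (n + 1) - x n = 1 ∨ x (n + 1) - x n = -1)

/-- Number of individuals of the excursion `x` (of length `θ`) born at level `h`,
i.e. number of up-steps from `h` to `h+1`. -/
def levelCount (x : ℕ → ℤ) (θ : ℕ) (h : ℤ) : ℕ :=
  ((Finset.range θ).filter (fun n => x n = h ∧ x (n + 1) = x n + 1)).card

/-- For negative excursions: number of individuals born at level `h`,
i.e. number of down-steps from `h` to `h-1`. -/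
def levelCountDown (x : ℕ → ℤ) (θ : ℕ) (h : ℤ) : ℕ :=
  ((Finset.range θ).filter (fun n => x n = h ∧ x (n + 1) = x n - 1)).card

/-- `(b,t)` is (the birth/death time pair of) an individual of the excursion `x`:
born at time `b` at level `x b`, with an up-step at `b`, dying at the first
return time `t` to its birth level. -/
def IsIndividual (x : ℕ → ℤ) (θ b t : ℕ) : Prop :=
  b < t ∧ t ≤ θ ∧ x (b + 1) = x b + 1 ∧ x t = x b ∧
    ∀ n, b < n → n < t → x n ≠ x b

/-- for any admissible sequence of level numbers there is a
positive excursion realizing it. -/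


def zig : ℕ → List ℤ
  | 0 => []
  | k+1 => 1 :: -1 :: zig k

def desc (N : ℕ → ℕ) : ℕ → List ℤ
  | 0 => []
  | h+1 => -1 :: (zig (N h - 1) ++ desc N h)

def pathOf (s : List ℤ) : ℕ → ℤ := fun n => (s.take n).sum

def cnt : List ℤ → ℤ → ℕ
  | [], _ => 0
  | a :: s, h => (if a = 1 ∧ h = 0 then 1 else 0) + cnt s (h - a)

@[simp] lemma pathOf_zero (s : List ℤ) : pathOf s 0 = 0 := rfl

@[simp] lemma pathOf_cons_succ (a : ℤ) (s : List ℤ) (n : ℕ) :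
    pathOf (a :: s) (n+1) = a + pathOf s n := by
  simp [pathOf]

lemma pathOf_append_le (s t : List ℤ) (n : ℕ) (hn : n ≤ s.length) :
    pathOf (s ++ t) n = pathOf s n := by
  simp [pathOf, List.take_append_of_le_length hn]

lemma pathOf_append_add (s t : List ℤ) (m : ℕ) :
    pathOf (s ++ t) (s.length + m) = s.sum + pathOf t m := by
  simp [pathOf, List.take_append, List.take_of_length_le (Nat.le_add_right s.length m)]

lemma pathOf_length (s : List ℤ) : pathOf s s.length = s.sum := by
  simp [pathOf]

@[simp] lemma zig_sum (k : ℕ) : (zig k).sum = 0 := by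
  induction k with
  | zero => rfl
  | succ k ih => simp [zig, ih]

@[simp] lemma zig_length (k : ℕ) : (zig k).length = 2 * k := by
  induction k with
  | zero => rfl
  | succ k ih => simp [zig, ih]; ring

@[simp] lemma desc_sum (N : ℕ → ℕ) (h : ℕ) : (desc N h).sum = -(h : ℤ) := by
  induction h with
  | zero => rfl
  | succ h ih => simp [desc, ih]

lemma desc_length (N : ℕ → ℕ) (h : ℕ) :
    (desc N h).length = h + 2 * ∑ i ∈ Finset.range h, (N i - 1) := by
  induction h with
  | zero => rfl
  | succ h ih =>
    simp [desc, ih, Finset.sum_range_succ]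
    ring

lemma cnt_append (s t : List ℤ) (h : ℤ) :
    cnt (s ++ t) h = cnt s h + cnt t (h - s.sum) := by
  induction s generalizing h with
  | nil => simp [cnt]
  | cons a s ih =>
    simp only [List.cons_append, cnt, List.sum_cons, ih]
    rw [
      show h - a - s.sum = h - (a + s.sum) from by ring, add_assoc]

lemma cnt_zig (k : ℕ) (h : ℤ) : cnt (zig k) h = if h = 0 then k else 0 := by
  induction k generalizing h with
  | zero => simp [zig, cnt]
  | succ k ih =>
    simp only [zig, cnt, ih]
    norm_num
    split_ifs <;> omega

lemma cnt_replicate (H : ℕ) (h : ℤ) :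
    cnt (List.replicate H (1:ℤ)) h = if 0 ≤ h ∧ h < H then 1 else 0 := by
  induction H generalizing h with
  | zero =>
    simp only [List.replicate_zero, cnt, Nat.cast_zero]
    split_ifs with h1 <;> omega
  | succ H ih =>
    simp only [List.replicate_succ, cnt, ih]
    norm_num
    push_cast
    split_ifs <;> omega

lemma cnt_desc (N : ℕ → ℕ) (h : ℕ) (g : ℤ) :
    cnt (desc N h) g = if -(h:ℤ) ≤ g ∧ g < 0 then N ((h:ℤ) + g).toNat - 1 else 0 := by
  induction h generalizing g with
  | zero =>
    simp only [desc, cnt, Nat.cast_zero]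
    split_ifs with h1 <;> omega
  | succ h ih =>
    simp only [desc, cnt, cnt_append, cnt_zig, zig_sum, sub_zero, sub_neg_eq_add, ih]
    rw [if_neg (by simp : ¬((-1:ℤ) = 1 ∧ g = 0))]
    by_cases hg : g = -1
    · subst hg
      rw [show (-1:ℤ) + 1 = 0 from by ring, if_pos rfl,
        if_neg (show ¬(-(h:ℤ) ≤ 0 ∧ (0:ℤ) < 0) from by omega),
        if_pos (show -((h+1:ℕ):ℤ) ≤ -1 ∧ (-1:ℤ) < 0 from ⟨by push_cast; omega, by omega⟩)]
      rw [show ((h+1:ℕ):ℤ) + -1 = ((h:ℕ):ℤ) from by push_cast; ring, Int.toNat_natCast]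
      simp
    · rw [if_neg (by omega : ¬(g + 1 = 0))]
      by_cases hg2 : -(h:ℤ) ≤ g + 1 ∧ g + 1 < 0
      · rw [if_pos hg2, if_pos (show -((h+1:ℕ):ℤ) ≤ g ∧ g < 0 from ⟨by push_cast; omega, by omega⟩)]
        rw [show (h:ℤ) + (g+1) = ((h+1:ℕ):ℤ) + g from by push_cast; ring]
        simp
      · rw [if_neg hg2, if_neg (by push_cast; omega)]

lemma levelCount_eq_cnt (s : List ℤ) (h : ℤ) :
    levelCount (pathOf s) s.length h = cnt s h := by
  induction s generalizing h with
  | nil => simp [levelCount, cnt]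
  | cons a s ih =>
    rw [levelCount, Finset.card_filter, List.length_cons, Finset.sum_range_succ',
      show cnt (a::s) h = (if a = 1 ∧ h = 0 then 1 else 0) + cnt s (h - a) from rfl,
      ← ih (h - a), levelCount, Finset.card_filter, add_comm]
    congr 1
    · apply if_congr _ rfl rfl
      simp only [pathOf_zero, zero_add, pathOf_cons_succ]
      constructor <;> rintro ⟨h1, h2⟩ <;> exact ⟨by omega, by omega⟩
    · apply Finset.sum_congr rfl
      intro m _
      apply if_congr _ rfl rfl
      simp only [pathOf_cons_succ]
      constructor <;> rintro ⟨h1, h2⟩ <;> exact ⟨by omega, by omega⟩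

lemma pathOf_succ_sub (s : List ℤ) (n : ℕ) (hn : n < s.length) :
    pathOf s (n+1) - pathOf s n = s.get ⟨n, hn⟩ := by
  unfold pathOf
  rw [List.take_succ, List.sum_append, List.getElem?_eq_getElem hn]
  simp

lemma zig_mem (k : ℕ) : ∀ a ∈ zig k, a = 1 ∨ a = -1 := by
  induction k with
  | zero => simp [zig]
  | succ k ih => simpa [zig] using ih

lemma desc_mem (N : ℕ → ℕ) (h : ℕ) : ∀ a ∈ desc N h, a = 1 ∨ a = -1 := by
  induction h with
  | zero => simp [desc]
  | succ h ih =>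
    intro a ha
    simp only [desc, List.mem_cons, List.mem_append] at ha
    rcases ha with rfl | ha | ha
    · right; rfl
    · exact zig_mem _ a ha
    · exact ih a ha

lemma zig_path_nonneg (k m : ℕ) : 0 ≤ pathOf (zig k) m := by
  induction k generalizing m with
  | zero => simp [zig, pathOf]
  | succ k ih =>
    match m with
    | 0 => simp
    | 1 => simp [zig]
    | (m+2) =>
      have : pathOf (zig (k+1)) (m+2) = pathOf (zig k) m := by
        simp [zig]
      rw [this]; exact ih m

lemma desc_path_lb (N : ℕ → ℕ) (h0 : N 0 = 1) (h : ℕ) :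
    ∀ m, m < (desc N h).length → -(h:ℤ) + 1 ≤ pathOf (desc N h) m := by
  induction h with
  | zero => intro m hm; simp [desc] at hm
  | succ h ih =>
    intro m hm
    match m with
    | 0 => simp
    | (m+1) =>
      rw [show desc N (h+1) = -1 :: (zig (N h - 1) ++ desc N h) from rfl] at hm ⊢
      rw [pathOf_cons_succ]
      simp only [List.length_cons, List.length_append, zig_length] at hm
      rcases Nat.eq_zero_or_pos h with rfl | hpos
      · simp [h0, desc] at hm
      · by_cases hm2 : m ≤ 2 * (N h - 1)
        · rw [pathOf_append_le _ _ _ (by simpa using hm2)]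
          have := zig_path_nonneg (N h - 1) m
          push_cast; omega
        · have e : m = (zig (N h - 1)).length + (m - 2 * (N h - 1)) := by
            simp only [zig_length]; omega
          rw [e, pathOf_append_add, zig_sum]
          have hlt : m - 2 * (N h - 1) < (desc N h).length := by omega
          have := ih _ hlt
          push_cast at *; omega

theorem exists_excursion_with_level_numbers (N : ℕ → ℕ) (H : ℕ)
    (h0 : N 0 = 1) (hH : 1 ≤ H) (hpos : ∀ h, h < H → 0 < N h)
    (hzero : ∀ h, H ≤ h → N h = 0) :
    ∃ x : ℕ → ℤ, IsPosExc x (2 * ∑ h ∈ Finset.range H, N h) ∧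
      ∀ h : ℕ, levelCount x (2 * ∑ h ∈ Finset.range H, N h) (h : ℤ) = N h := by

  set S : List ℤ := List.replicate H (1:ℤ) ++ desc N H with hS
  have hsum : ∑ i ∈ Finset.range H, N i = H + ∑ i ∈ Finset.range H, (N i - 1) := by
    have : ∀ i ∈ Finset.range H, N i = 1 + (N i - 1) := by
      intro i hi
      have := hpos i (Finset.mem_range.mp hi)
      omega
    rw [Finset.sum_congr rfl this, Finset.sum_add_distrib, Finset.sum_const,
      Finset.card_range, smul_eq_mul, mul_one]
  have hlen : S.length = 2 * ∑ h ∈ Finset.range H, N h := by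
    simp only [hS, List.length_append, List.length_replicate, desc_length]
    omega
  have hrepsum : (List.replicate H (1:ℤ)).sum = (H : ℤ) := by
    simp [List.sum_replicate]
  have hreplen : (List.replicate H (1:ℤ)).length = H := by simp
  refine ⟨pathOf S, ⟨rfl, ?_, ?_, ?_⟩, ?_⟩
  · rw [← hlen, pathOf_length]
    simp [hS, hrepsum]
  · intro n hn hn2
    rw [← hlen] at hn2
    rcases le_or_gt n H with h1 | h1
    · rw [pathOf_append_le _ _ _ (by omega)]
      have : pathOf (List.replicate H (1:ℤ)) n = (n : ℤ) := by
        simp [pathOf, List.take_replicate, List.sum_replicate, Nat.min_eq_left h1]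
      rw [this]
      exact_mod_cast hn
    · have e : n = (List.replicate H (1:ℤ)).length + (n - H) := by omega
      rw [e, pathOf_append_add, hrepsum]
      have hlt : n - H < (desc N H).length := by
        simp only [hS, List.length_append, hreplen] at hn2
        omega
      have := desc_path_lb N h0 H _ hlt
      omega
  · intro n hn
    rw [← hlen] at hn
    have := pathOf_succ_sub S n hn
    rcases List.mem_append.mp (List.get_mem S ⟨n, hn⟩) with hmem | hmem
    · left
      rw [this]
      have := List.eq_of_mem_replicate hmem
      omega
    · rcases desc_mem N H _ hmem with h2 | h2 <;> [left; right] <;> omega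
  · intro h
    rw [← hlen, levelCount_eq_cnt, hS, cnt_append, cnt_replicate, hrepsum, cnt_desc]
    by_cases hh : h < H
    · rw [if_pos ⟨by positivity, by exact_mod_cast hh⟩, if_pos ⟨by omega, by omega⟩]
      rw [show (H:ℤ) + ((h:ℤ) - (H:ℤ)) = (h:ℤ) from by ring, Int.toNat_natCast]
      have := hpos h hh
      omega
    · rw [if_neg (by intro hc; omega), if_neg (by intro hc; omega)]
      rw [hzero h (by omega)]
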